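/- arXiv:2511.10875 — 4 statements merged into one kernel-verified Lean document; each statement's English description precedes it below -/
import Mathlib

section
/- For every n ≥ 3, the independence number of the cubical staircase graph CS_n equals (n³ − 3n² + 2n)/12 if n is even, and (n³ − 3n² + 5n − 3)/12 if n is odd. -/
open SimpleGraph Finset

/-- The `k`-token graph of a graph `G`: vertices are `k`-element subsets of the vertex set,
two subsets adjacent iff their symmetric difference is `{x, y}` with `xy` an edge of `G`. -/
def tokenGraph {V : Type*} [DecidableEq V] (G : SimpleGraph V) (k : ℕ) :
    SimpleGraph {s : Finset V // s.card = k} where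
  Adj A B := ∃ x y, G.Adj x y ∧ symmDiff A.1 B.1 = {x, y}
  symm := ⟨by
    rintro A B ⟨x, y, hxy, h⟩
    exact ⟨x, y, hxy, by rwa [symmDiff_comm]⟩⟩
  loopless := ⟨by
    rintro A ⟨x, y, hxy, h⟩
    rw [symmDiff_self] at h
    exact (Finset.insert_nonempty x {y}).ne_empty (by simpa using h.symm)⟩

/-- Vertex set of the cubical staircase graph `CS n` (1-indexed coordinates). -/
abbrev CSVert (n : ℕ) :=
  {v : ℕ × ℕ × ℕ // 1 ≤ v.1 ∧ v.1 ≤ n - 2 ∧ 1 ≤ v.2.1 ∧ v.2.1 ≤ v.1 ∧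
    1 ≤ v.2.2 ∧ v.2.2 ≤ n - 1 - v.1}

/-- The cubical staircase graph `CS n`: two vertices are adjacent iff they differ in exactly
one coordinate, by exactly 1. -/
def CS (n : ℕ) : SimpleGraph (CSVert n) where
  Adj a b :=
    (a.1.1 = b.1.1 ∧ a.1.2.1 = b.1.2.1 ∧ (a.1.2.2 + 1 = b.1.2.2 ∨ b.1.2.2 + 1 = a.1.2.2)) ∨
    (a.1.1 = b.1.1 ∧ a.1.2.2 = b.1.2.2 ∧ (a.1.2.1 + 1 = b.1.2.1 ∨ b.1.2.1 + 1 = a.1.2.1)) ∨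
    (a.1.2.1 = b.1.2.1 ∧ a.1.2.2 = b.1.2.2 ∧ (a.1.1 + 1 = b.1.1 ∨ b.1.1 + 1 = a.1.1))
  symm := ⟨fun a b h => by omega⟩
  loopless := ⟨fun a h => by omega⟩

/-- Disjoint union of an arbitrary family of graphs. -/
def sigmaGraph {ι : Type*} {V : ι → Type*} (G : ∀ i, SimpleGraph (V i)) :
    SimpleGraph (Σ i, V i) where
  Adj a b := ∃ (i : ι) (x y : V i), (G i).Adj x y ∧ a = ⟨i, x⟩ ∧ b = ⟨i, y⟩
  symm := ⟨by rintro a b ⟨i, x, y, h, rfl, rfl⟩; exact ⟨i, y, x, h.symm, rfl, rfl⟩⟩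
  loopless := ⟨by
    rintro a ⟨i, x, y, h, rfl, he⟩
    exact h.ne (by simpa using he)⟩

namespace CSaux

def P (n : ℕ) (v : ℕ × ℕ × ℕ) : Prop :=
  1 ≤ v.1 ∧ v.1 ≤ n - 2 ∧ 1 ≤ v.2.1 ∧ v.2.1 ≤ v.1 ∧ 1 ≤ v.2.2 ∧ v.2.2 ≤ n - 1 - v.1

def g (n : ℕ) (v : ℕ × ℕ × ℕ) : ℕ × ℕ × ℕ :=
  if v.2.2 % 2 = 0 then (v.1, v.2.1, v.2.2 - 1)
  else if v.2.2 < n - 1 - v.1 then (v.1, v.2.1, v.2.2 + 1)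
  else if v.2.1 % 2 = 0 then (v.1, v.2.1 - 1, v.2.2)
  else if v.2.1 < v.1 then (v.1, v.2.1 + 1, v.2.2)
  else v

lemma g_mem {n : ℕ} {v : ℕ × ℕ × ℕ} (h : P n v) : P n (g n v) := by
  obtain ⟨i, j, k⟩ := v
  simp only [P, g] at *
  split_ifs <;> simp_all <;> omega

lemma g_invol {n : ℕ} {v : ℕ × ℕ × ℕ} (h : P n v) : g n (g n v) = v := by
  obtain ⟨i, j, k⟩ := v
  simp only [P] at h
  simp only [g]
  split_ifs <;> simp_all [Prod.ext_iff] <;> omega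

lemma g_fix {n : ℕ} {v : ℕ × ℕ × ℕ} (h : P n v) :
    g n v = v ↔ (v.2.2 % 2 = 1 ∧ v.2.2 = n - 1 - v.1 ∧ v.2.1 % 2 = 1 ∧ v.2.1 = v.1) := by
  obtain ⟨i, j, k⟩ := v
  simp only [P] at h
  simp only [g]
  split_ifs <;> simp_all [Prod.ext_iff] <;> omega

lemma g_adj {n : ℕ} {v : ℕ × ℕ × ℕ} (h : P n v) (hne : g n v ≠ v) :
    ((g n v).1 = v.1 ∧ (g n v).2.1 = v.2.1 ∧ ((g n v).2.2 + 1 = v.2.2 ∨ v.2.2 + 1 = (g n v).2.2)) ∨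
    ((g n v).1 = v.1 ∧ (g n v).2.2 = v.2.2 ∧ ((g n v).2.1 + 1 = v.2.1 ∨ v.2.1 + 1 = (g n v).2.1)) ∨
    ((g n v).2.1 = v.2.1 ∧ (g n v).2.2 = v.2.2 ∧ ((g n v).1 + 1 = v.1 ∨ v.1 + 1 = (g n v).1)) := by
  obtain ⟨i, j, k⟩ := v
  simp only [P] at h
  simp only [g] at *
  split_ifs at * <;> simp_all [Prod.ext_iff] <;> omega

lemma Icc_succ (m : ℕ) : Icc 1 (m + 1) = insert (m + 1) (Icc 1 m) := by
  ext x; simp only [Finset.mem_Icc, Finset.mem_insert]; omega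

lemma gauss (m : ℕ) : 2 * ∑ i ∈ Icc 1 m, i = m * (m + 1) := by
  induction m with
  | zero => simp
  | succ m ih =>
    rw [Icc_succ m, Finset.sum_insert (by simp)]
    ring_nf
    ring_nf at ih
    omega

lemma cubesum (m : ℕ) : 6 * ∑ i ∈ Icc 1 m, i * (m + 1 - i) = m * (m + 1) * (m + 2) := by
  induction m with
  | zero => simp
  | succ m ih =>
    rw [Icc_succ m, Finset.sum_insert (by simp)]
    have hs : ∑ i ∈ Icc 1 m, i * (m + 1 + 1 - i) = (∑ i ∈ Icc 1 m, i * (m + 1 - i)) + ∑ i ∈ Icc 1 m, i := by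
      rw [← Finset.sum_add_distrib]
      refine Finset.sum_congr rfl fun i hi => ?_
      simp only [Finset.mem_Icc] at hi
      have : m + 1 + 1 - i = (m + 1 - i) + 1 := by omega
      rw [this]; ring
    have h1 : m + 1 + 1 - (m + 1) = 1 := by omega
    rw [hs, h1]
    have hg := gauss m
    calc 6 * ((m + 1) * 1 + (∑ i ∈ Icc 1 m, i * (m + 1 - i) + ∑ i ∈ Icc 1 m, i))
        = 6 * (m + 1) + 6 * ∑ i ∈ Icc 1 m, i * (m + 1 - i) + 3 * (2 * ∑ i ∈ Icc 1 m, i) := by ring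
      _ = 6 * (m + 1) + m * (m + 1) * (m + 2) + 3 * (m * (m + 1)) := by rw [ih, hg]
      _ = (m + 1) * (m + 1 + 1) * (m + 1 + 2) := by ring

lemma oddcount (m : ℕ) : ((Icc 1 m).filter (fun i => i % 2 = 1)).card = (m + 1) / 2 := by
  induction m with
  | zero => simp
  | succ m ih =>
    rw [Icc_succ m, Finset.filter_insert]
    by_cases h : (m + 1) % 2 = 1
    · rw [if_pos h, Finset.card_insert_of_notMem (by simp)]
      omega
    · rw [if_neg h]
      omega

/-- The matching function on `CSVert n`. -/
def F (n : ℕ) (v : CSVert n) : CSVert n := ⟨g n v.1, g_mem v.2⟩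

lemma F_invol {n : ℕ} (v : CSVert n) : F n (F n v) = v := Subtype.ext (g_invol v.2)

lemma F_adj {n : ℕ} (v : CSVert n) (h : F n v ≠ v) : (CS n).Adj (F n v) v :=
  g_adj v.2 fun he => h (Subtype.ext he)

lemma adj_parity {n : ℕ} {a b : CSVert n} (h : (CS n).Adj a b) :
    (a.1.1 + a.1.2.1 + a.1.2.2) % 2 ≠ (b.1.1 + b.1.2.1 + b.1.2.2) % 2 := by
  have h' : (a.1.1 = b.1.1 ∧ a.1.2.1 = b.1.2.1 ∧ (a.1.2.2 + 1 = b.1.2.2 ∨ b.1.2.2 + 1 = a.1.2.2)) ∨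
    (a.1.1 = b.1.1 ∧ a.1.2.2 = b.1.2.2 ∧ (a.1.2.1 + 1 = b.1.2.1 ∨ b.1.2.1 + 1 = a.1.2.1)) ∨
    (a.1.2.1 = b.1.2.1 ∧ a.1.2.2 = b.1.2.2 ∧ (a.1.1 + 1 = b.1.1 ∨ b.1.1 + 1 = a.1.1)) := h
  omega

lemma F_fix_parity {n : ℕ} {v : CSVert n} (h : F n v = v) :
    (v.1.1 + v.1.2.1 + v.1.2.2) % 2 = 1 := by
  have h' : g n v.1 = v.1 := congrArg Subtype.val h
  rw [g_fix v.2] at h'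
  omega

def box (n : ℕ) : Finset (ℕ × ℕ × ℕ) := Icc 1 n ×ˢ Icc 1 n ×ˢ Icc 1 n

def univV (n : ℕ) : Finset (CSVert n) :=
  (box n).subtype fun v => 1 ≤ v.1 ∧ v.1 ≤ n - 2 ∧ 1 ≤ v.2.1 ∧ v.2.1 ≤ v.1 ∧
    1 ≤ v.2.2 ∧ v.2.2 ≤ n - 1 - v.1

lemma mem_univV {n : ℕ} (hn : 3 ≤ n) (v : CSVert n) : v ∈ univV n := by
  have h := v.2
  simp only [univV, Finset.mem_subtype, box, Finset.mem_product, Finset.mem_Icc]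
  exact ⟨⟨by omega, by omega⟩, ⟨by omega, by omega⟩, by omega, by omega⟩

def oddS (n : ℕ) : Finset (CSVert n) :=
  (univV n).filter fun v => (v.1.1 + v.1.2.1 + v.1.2.2) % 2 = 1

def evenS (n : ℕ) : Finset (CSVert n) :=
  (univV n).filter fun v => ¬((v.1.1 + v.1.2.1 + v.1.2.2) % 2 = 1)

def fixS (n : ℕ) : Finset (CSVert n) :=
  (univV n).filter fun v => F n v = v

lemma card_univV {n : ℕ} (hn : 3 ≤ n) : 6 * (univV n).card = (n - 2) * (n - 1) * n := by
  have h1 : (univV n).card = ((box n).filter (fun v => 1 ≤ v.1 ∧ v.1 ≤ n - 2 ∧ 1 ≤ v.2.1 ∧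
      v.2.1 ≤ v.1 ∧ 1 ≤ v.2.2 ∧ v.2.2 ≤ n - 1 - v.1)).card := Finset.card_subtype _ _
  have h2 : ((box n).filter (fun v => 1 ≤ v.1 ∧ v.1 ≤ n - 2 ∧ 1 ≤ v.2.1 ∧
      v.2.1 ≤ v.1 ∧ 1 ≤ v.2.2 ∧ v.2.2 ≤ n - 1 - v.1)).card =
      ((Icc 1 (n-2)).sigma fun i => Icc 1 i ×ˢ Icc 1 (n-1-i)).card := by
    refine Finset.card_nbij' (fun v => ⟨v.1, v.2⟩) (fun x => (x.1, x.2)) ?_ ?_ ?_ ?_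
    · rintro ⟨i, j, k⟩ hv
      simp only [Finset.mem_coe, box, Finset.mem_filter, Finset.mem_product, Finset.mem_Icc] at hv
      simp only [Finset.mem_coe, Finset.mem_sigma, Finset.mem_product, Finset.mem_Icc]
      omega
    · rintro ⟨i, j, k⟩ hv
      simp only [Finset.mem_coe, Finset.mem_sigma, Finset.mem_product, Finset.mem_Icc] at hv
      simp only [Finset.mem_coe, box, Finset.mem_filter, Finset.mem_product, Finset.mem_Icc]
      omega
    · rintro ⟨i, j, k⟩ _; rfl
    · rintro ⟨i, j, k⟩ _; rfl
  have h3 : ((Icc 1 (n-2)).sigma fun i => Icc 1 i ×ˢ Icc 1 (n-1-i)).card =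
      ∑ i ∈ Icc 1 (n-2), i * (n - 1 - i) := by
    rw [Finset.card_sigma]
    refine Finset.sum_congr rfl fun i hi => ?_
    rw [Finset.card_product, Nat.card_Icc, Nat.card_Icc]
    simp only [Finset.mem_Icc] at hi
    congr 1 <;> omega
  have h4 : ∑ i ∈ Icc 1 (n-2), i * (n - 1 - i) = ∑ i ∈ Icc 1 (n-2), i * ((n-2) + 1 - i) := by
    refine Finset.sum_congr rfl fun i hi => ?_
    congr 1; omega
  rw [h1, h2, h3, h4, cubesum]
  have e1 : n - 2 + 1 = n - 1 := by omega
  have e2 : n - 2 + 2 = n := by omega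
  rw [e1, e2]

lemma card_fixS {n : ℕ} (hn : 3 ≤ n) :
    (fixS n).card = if n % 2 = 1 then (n - 1) / 2 else 0 := by
  have hb : (fixS n).card =
      ((Icc 1 (n-2)).filter fun i => i % 2 = 1 ∧ (n - 1 - i) % 2 = 1).card := by
    refine Finset.card_bij (fun v _ => v.1.1) ?_ ?_ ?_
    · intro v hv
      simp only [fixS, Finset.mem_filter] at hv
      have h' : g n v.1 = v.1 := congrArg Subtype.val hv.2
      rw [g_fix v.2] at h'
      have hp := v.2
      simp only [Finset.mem_filter, Finset.mem_Icc]
      omega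
    · intro a ha b hb h
      replace h : (a : ℕ × ℕ × ℕ).1 = (b : ℕ × ℕ × ℕ).1 := h
      simp only [fixS, Finset.mem_filter] at ha hb
      have ha' : g n a.1 = a.1 := congrArg Subtype.val ha.2
      have hb' : g n b.1 = b.1 := congrArg Subtype.val hb.2
      rw [g_fix a.2] at ha'
      rw [g_fix b.2] at hb'
      apply Subtype.ext
      apply Prod.ext
      · exact h
      · apply Prod.ext <;> omega
    · intro b hbm
      simp only [Finset.mem_filter, Finset.mem_Icc] at hbm
      have hP : P n (b, b, n - 1 - b) := by
        simp only [P]; omega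
      refine ⟨⟨(b, b, n - 1 - b), hP⟩, ?_, rfl⟩
      simp only [fixS, Finset.mem_filter]
      refine ⟨mem_univV hn _, ?_⟩
      apply Subtype.ext
      show g n (b, b, n - 1 - b) = (b, b, n - 1 - b)
      rw [g_fix hP]
      exact ⟨(by omega : (n - 1 - b) % 2 = 1), rfl, (by omega : b % 2 = 1), rfl⟩
  rw [hb]
  by_cases hpar : n % 2 = 1
  · rw [if_pos hpar]
    have : ((Icc 1 (n-2)).filter fun i => i % 2 = 1 ∧ (n - 1 - i) % 2 = 1) =
        ((Icc 1 (n-2)).filter fun i => i % 2 = 1) := by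
      refine Finset.filter_congr fun i hi => ?_
      simp only [Finset.mem_Icc] at hi
      constructor
      · exact fun h => h.1
      · intro h; exact ⟨h, by omega⟩
    rw [this, oddcount]
    omega
  · rw [if_neg hpar, Finset.card_eq_zero]
    rw [Finset.filter_eq_empty_iff]
    intro i hi
    simp only [Finset.mem_Icc] at hi
    omega

lemma fix_subset_odd {n : ℕ} : fixS n ⊆ oddS n := by
  intro v hv
  simp only [fixS, Finset.mem_filter] at hv
  simp only [oddS, Finset.mem_filter]
  exact ⟨hv.1, F_fix_parity hv.2⟩

lemma card_odd_sdiff {n : ℕ} (hn : 3 ≤ n) : (oddS n \ fixS n).card = (evenS n).card := by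
  refine Finset.card_nbij' (F n) (F n) ?_ ?_ ?_ ?_
  · intro v hv
    simp only [Finset.mem_coe, Finset.mem_sdiff, oddS, fixS, Finset.mem_filter, not_and] at hv
    obtain ⟨⟨_, hodd⟩, hnfix⟩ := hv
    have hne : F n v ≠ v := hnfix (mem_univV hn v)
    have := adj_parity (F_adj v hne)
    simp only [Finset.mem_coe, evenS, Finset.mem_filter]
    exact ⟨mem_univV hn _, by omega⟩
  · intro v hv
    simp only [Finset.mem_coe, evenS, Finset.mem_filter] at hv
    have hnfix : F n v ≠ v := fun h => by have := F_fix_parity h; omega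
    have := adj_parity (F_adj v hnfix)
    simp only [Finset.mem_coe, Finset.mem_sdiff, oddS, fixS, Finset.mem_filter, not_and]
    refine ⟨⟨mem_univV hn _, by omega⟩, fun _ hfix => ?_⟩
    apply hnfix
    have h1 := F_invol (n := n) v
    rw [hfix] at h1
    exact h1
  · intro v _; exact F_invol v
  · intro v _; exact F_invol v

lemma card_odd_eq {n : ℕ} (hn : 3 ≤ n) :
    (oddS n).card = (evenS n).card + (fixS n).card := by
  rw [← card_odd_sdiff hn]
  have := Finset.card_sdiff_add_card_eq_card (fix_subset_odd (n := n))
  omega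

lemma card_split {n : ℕ} : (oddS n).card + (evenS n).card = (univV n).card :=
  Finset.card_filter_add_card_filter_not _

lemma two_odd {n : ℕ} (hn : 3 ≤ n) :
    2 * (oddS n).card = (univV n).card + (fixS n).card := by
  have h1 := card_odd_eq hn
  have h2 := card_split (n := n)
  omega

lemma oddS_indep {n : ℕ} : ∀ a ∈ oddS n, ∀ b ∈ oddS n, ¬(CS n).Adj a b := by
  intro a ha b hb hadj
  simp only [oddS, Finset.mem_filter] at ha hb
  exact adj_parity hadj (by omega)

lemma indep_le {n : ℕ} (hn : 3 ≤ n) (s : Finset (CSVert n))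
    (hind : ∀ a ∈ s, ∀ b ∈ s, ¬(CS n).Adj a b) : s.card ≤ (oddS n).card := by
  classical
  have hsub : s ⊆ univV n := fun v _ => mem_univV hn v
  have hmap : ∀ a ∈ s \ fixS n, F n a ∈ univV n \ s := by
    intro a ha
    simp only [Finset.mem_sdiff, fixS, Finset.mem_filter, not_and] at ha
    obtain ⟨has, hnfix⟩ := ha
    have hne : F n a ≠ a := hnfix (mem_univV hn a)
    simp only [Finset.mem_sdiff]
    refine ⟨mem_univV hn _, fun hFs => ?_⟩
    exact hind (F n a) hFs a has (F_adj a hne)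
  have hinj : Set.InjOn (F n) ↑(s \ fixS n) := by
    intro a _ b _ h
    rw [← F_invol a, h, F_invol]
  have h1 : (s \ fixS n).card ≤ (univV n \ s).card :=
    Finset.card_le_card_of_injOn (F n) hmap hinj
  have h2 : (univV n \ s).card = (univV n).card - s.card := Finset.card_sdiff_of_subset hsub
  have h3 : (s ∩ fixS n).card + (s \ fixS n).card = s.card :=
    Finset.card_inter_add_card_sdiff s (fixS n)
  have h4 : (s ∩ fixS n).card ≤ (fixS n).card :=
    Finset.card_le_card (Finset.inter_subset_right)
  have h5 : s.card ≤ (univV n).card := Finset.card_le_card hsub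
  have h6 := two_odd hn
  omega

end CSaux

theorem stmt8 {n : ℕ} (hn : 3 ≤ n) :
    IsGreatest {k : ℕ | ∃ s : Finset (CSVert n), s.card = k ∧
        ∀ a ∈ s, ∀ b ∈ s, ¬(CS n).Adj a b}
      (if Even n then (n ^ 3 - 3 * n ^ 2 + 2 * n) / 12
       else (n ^ 3 - 3 * n ^ 2 + 5 * n - 3) / 12) := by
  classical
  have hval : (if Even n then (n ^ 3 - 3 * n ^ 2 + 2 * n) / 12
       else (n ^ 3 - 3 * n ^ 2 + 5 * n - 3) / 12) = (CSaux.oddS n).card := by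
    have hN := CSaux.card_univV hn
    have hd := CSaux.card_fixS hn
    have ht := CSaux.two_odd hn
    by_cases hpar : n % 2 = 1
    · rw [if_neg (by rw [Nat.even_iff]; omega)]
      rw [if_pos hpar] at hd
      have h12 : 12 * (CSaux.oddS n).card = (n - 2) * (n - 1) * n + 3 * (n - 1) := by
        generalize (n - 2) * (n - 1) * n = A at hN ⊢
        omega
      have hpoly : n ^ 3 - 3 * n ^ 2 + 5 * n - 3 = 12 * (CSaux.oddS n).card := by
        obtain ⟨m, rfl⟩ : ∃ m, n = m + 3 := ⟨n - 3, by omega⟩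
        rw [h12]
        have e1 : m + 3 - 2 = m + 1 := by omega
        have e2 : m + 3 - 1 = m + 2 := by omega
        rw [e1, e2]
        have key : (m + 3) ^ 3 + 5 * (m + 3) =
            ((m + 1) * (m + 2) * (m + 3) + 3 * (m + 2)) + 3 * (m + 3) ^ 2 + 3 := by ring
        have hb : 3 * (m + 3) ^ 2 ≤ (m + 3) ^ 3 := by
          have h3 : (m + 3) ^ 3 = (m + 3) * (m + 3) ^ 2 := by ring
          rw [h3]; exact Nat.mul_le_mul_right _ (by omega)
        generalize (m + 1) * (m + 2) * (m + 3) = C at key ⊢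
        generalize (m + 3) ^ 3 = a at key hb ⊢
        generalize (m + 3) ^ 2 = b at key hb ⊢
        omega
      rw [hpoly, Nat.mul_div_cancel_left _ (by norm_num)]
    · rw [if_pos (Nat.even_iff.mpr (by omega))]
      rw [if_neg hpar] at hd
      have h12 : 12 * (CSaux.oddS n).card = (n - 2) * (n - 1) * n := by
        generalize (n - 2) * (n - 1) * n = A at hN ⊢
        omega
      have hpoly : n ^ 3 - 3 * n ^ 2 + 2 * n = 12 * (CSaux.oddS n).card := by
        obtain ⟨m, rfl⟩ : ∃ m, n = m + 3 := ⟨n - 3, by omega⟩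
        rw [h12]
        have e1 : m + 3 - 2 = m + 1 := by omega
        have e2 : m + 3 - 1 = m + 2 := by omega
        rw [e1, e2]
        have key : (m + 3) ^ 3 + 2 * (m + 3) =
            (m + 1) * (m + 2) * (m + 3) + 3 * (m + 3) ^ 2 := by ring
        have hb : 3 * (m + 3) ^ 2 ≤ (m + 3) ^ 3 := by
          have h3 : (m + 3) ^ 3 = (m + 3) * (m + 3) ^ 2 := by ring
          rw [h3]; exact Nat.mul_le_mul_right _ (by omega)
        generalize (m + 1) * (m + 2) * (m + 3) = C at key ⊢
        generalize (m + 3) ^ 3 = a at key hb ⊢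
        generalize (m + 3) ^ 2 = b at key hb ⊢
        omega
      rw [hpoly, Nat.mul_div_cancel_left _ (by norm_num)]
  rw [hval]
  constructor
  · exact ⟨CSaux.oddS n, rfl, CSaux.oddS_indep⟩
  · intro k hk
    obtain ⟨s, hc, hi⟩ := hk
    exact hc ▸ CSaux.indep_le hn s hi
end

section
/- For every n ≥ 4, the diameter of the 3-token graph Γ₃(P_n) of the path on n vertices equals 3(n−3). -/
open SimpleGraph Finset

namespace Stmt12Aux

variable {n : ℕ}

abbrev TV (n : ℕ) := {s : Finset (Fin n) // s.card = 3}
abbrev TG (n : ℕ) := tokenGraph (pathGraph n) 3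

def fsum (A : TV n) : ℕ := ∑ x ∈ A.1, x.val

lemma card3 {x y z : Fin n} (h1 : x ≠ y) (h2 : x ≠ z) (h3 : y ≠ z) :
    ({x, y, z} : Finset (Fin n)).card = 3 :=
  Finset.card_eq_three.mpr ⟨x, y, z, h1, h2, h3, rfl⟩

def mk (a b c : ℕ) (hab : a < b) (hbc : b < c) (hc : c < n) : TV n :=
  ⟨{⟨a, by omega⟩, ⟨b, by omega⟩, ⟨c, hc⟩},
    card3 (by simp [Fin.ext_iff]; omega) (by simp [Fin.ext_iff]; omega)
      (by simp [Fin.ext_iff]; omega)⟩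

lemma mk_eq {a b c a' b' c' : ℕ} {hab hbc hc hab' hbc' hc'}
    (h1 : a = a') (h2 : b = b') (h3 : c = c') :
    (mk a b c hab hbc hc : TV n) = mk a' b' c' hab' hbc' hc' := by
  subst h1; subst h2; subst h3; rfl

lemma fsum_mk {a b c : ℕ} (hab : a < b) (hbc : b < c) (hc : c < n) :
    fsum (mk a b c hab hbc hc) = a + b + c := by
  show (∑ x ∈ ({⟨a, by omega⟩, ⟨b, by omega⟩, ⟨c, hc⟩} : Finset (Fin n)), x.val) = a + b + c
  rw [Finset.sum_insert (by simp [Fin.ext_iff]; omega),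
    Finset.sum_insert (by simp [Fin.ext_iff]; omega), Finset.sum_singleton]
  simp
  omega

lemma exists_repr (A : TV n) :
    ∃ (a b c : ℕ) (hab : a < b) (hbc : b < c) (hc : c < n), A = mk a b c hab hbc hc := by
  obtain ⟨x, y, z, hxy, hxz, hyz, hA⟩ := Finset.card_eq_three.mp A.2
  have key : ∃ u v w : Fin n, u < v ∧ v < w ∧ ({x, y, z} : Finset (Fin n)) = {u, v, w} := by
    have e : ∀ u v w : Fin n, ({x,y,z} : Finset (Fin n)) = {u,v,w} ∨ True := fun _ _ _ => Or.inr trivial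
    rcases lt_trichotomy x y with h1 | h1 | h1
    · rcases lt_trichotomy y z with h2 | h2 | h2
      · exact ⟨x, y, z, h1, h2, rfl⟩
      · exact absurd h2 hyz
      · rcases lt_trichotomy x z with h3 | h3 | h3
        · exact ⟨x, z, y, h3, h2, by ext t; simp [Finset.mem_insert]; tauto⟩
        · exact absurd h3 hxz
        · exact ⟨z, x, y, h3, h1, by ext t; simp [Finset.mem_insert]; tauto⟩
    · exact absurd h1 hxy
    · rcases lt_trichotomy x z with h2 | h2 | h2
      · exact ⟨y, x, z, h1, h2, by ext t; simp [Finset.mem_insert]; tauto⟩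
      · exact absurd h2 hxz
      · rcases lt_trichotomy y z with h3 | h3 | h3
        · exact ⟨y, z, x, h3, h2, by ext t; simp [Finset.mem_insert]; tauto⟩
        · exact absurd h3 hyz
        · exact ⟨z, y, x, h3, h1, by ext t; simp [Finset.mem_insert]; tauto⟩
  obtain ⟨u, v, w, huv, hvw, heq⟩ := key
  refine ⟨u.val, v.val, w.val, huv, hvw, w.isLt, Subtype.ext ?_⟩
  show A.1 = _
  rw [hA, heq]
  rfl

lemma fsum_bounds (A : TV n) : 3 ≤ fsum A ∧ fsum A ≤ 3 * n - 6 := by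
  obtain ⟨a, b, c, hab, hbc, hc, rfl⟩ := exists_repr A
  rw [fsum_mk]
  omega

end Stmt12Aux

namespace Stmt12Aux
variable {n : ℕ}

lemma adj_top {a b c c' : ℕ} (hab : a < b) (hbc : b < c) (hc : c < n)
    (hbc' : b < c') (hc' : c' < n) (h : c = c' + 1) :
    (TG n).Adj (mk a b c hab hbc hc) (mk a b c' hab hbc' hc') := by
  refine ⟨⟨c, hc⟩, ⟨c', hc'⟩, pathGraph_adj.mpr (Or.inr (by simp; omega)), ?_⟩
  ext t
  simp [mk, Finset.mem_symmDiff, Fin.ext_iff]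
  omega

lemma adj_mid {a b b' c : ℕ} (hab : a < b) (hbc : b < c) (hc : c < n)
    (hab' : a < b') (hbc' : b' < c) (h : b = b' + 1) :
    (TG n).Adj (mk a b c hab hbc hc) (mk a b' c hab' hbc' hc) := by
  refine ⟨⟨b, by omega⟩, ⟨b', by omega⟩, pathGraph_adj.mpr (Or.inr (by simp; omega)), ?_⟩
  ext t
  simp [mk, Finset.mem_symmDiff, Fin.ext_iff]
  omega

lemma adj_bot {a a' b c : ℕ} (hab : a < b) (hbc : b < c) (hc : c < n)
    (hab' : a' < b) (h : a = a' + 1) :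
    (TG n).Adj (mk a b c hab hbc hc) (mk a' b c hab' hbc hc) := by
  refine ⟨⟨a, by omega⟩, ⟨a', by omega⟩, pathGraph_adj.mpr (Or.inr (by simp; omega)), ?_⟩
  ext t
  simp [mk, Finset.mem_symmDiff, Fin.ext_iff]
  omega

lemma exists_down (A : TV n) (h : 3 < fsum A) :
    ∃ B : TV n, (TG n).Adj A B ∧ fsum B + 1 = fsum A := by
  obtain ⟨a, b, c, hab, hbc, hc, rfl⟩ := exists_repr A
  rw [fsum_mk] at h
  by_cases h1 : b + 1 < c
  · exact ⟨mk a b (c-1) hab (by omega) (by omega),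
      adj_top hab hbc hc (by omega) (by omega) (by omega),
      by rw [fsum_mk, fsum_mk]; omega⟩
  · by_cases h2 : a + 1 < b
    · exact ⟨mk a (b-1) c (by omega) (by omega) hc,
        adj_mid hab hbc hc (by omega) (by omega) (by omega),
        by rw [fsum_mk, fsum_mk]; omega⟩
    · exact ⟨mk (a-1) b c (by omega) hbc hc,
        adj_bot hab hbc hc (by omega) (by omega),
        by rw [fsum_mk, fsum_mk]; omega⟩

lemma exists_up (A : TV n) (h : fsum A < 3 * n - 6) :
    ∃ B : TV n, (TG n).Adj A B ∧ fsum A + 1 = fsum B := by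
  obtain ⟨a, b, c, hab, hbc, hc, rfl⟩ := exists_repr A
  rw [fsum_mk] at h
  by_cases h1 : c + 1 < n
  · exact ⟨mk a b (c+1) hab (by omega) (by omega),
      (adj_top hab (by omega) (by omega) hbc hc rfl).symm,
      by rw [fsum_mk, fsum_mk]; omega⟩
  · by_cases h2 : b + 1 < c
    · exact ⟨mk a (b+1) c (by omega) (by omega) hc,
        (adj_mid (by omega) (by omega) hc hab hbc rfl).symm,
        by rw [fsum_mk, fsum_mk]; omega⟩
    · exact ⟨mk (a+1) b c (by omega) hbc hc,
        (adj_bot (by omega) hbc hc hab rfl).symm,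
        by rw [fsum_mk, fsum_mk]; omega⟩

end Stmt12Aux

namespace Stmt12Aux
variable {n : ℕ}

lemma adj_fsum {A B : TV n} (h : (TG n).Adj A B) :
    fsum A + 1 = fsum B ∨ fsum B + 1 = fsum A := by
  obtain ⟨x, y, hxy, hsd⟩ := h
  have hxyv : x.val + 1 = y.val ∨ y.val + 1 = x.val := pathGraph_adj.mp hxy
  have hxny : x ≠ y := by intro he; subst he; omega
  have hcard2 : (symmDiff A.1 B.1).card = 2 := by
    rw [hsd, Finset.card_insert_of_notMem (by simpa using hxny), Finset.card_singleton]
  have hdisj : Disjoint (A.1 \ B.1) (B.1 \ A.1) := disjoint_sdiff_sdiff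
  have hun : A.1 \ B.1 ∪ B.1 \ A.1 = symmDiff A.1 B.1 := by
    ext t; simp [Finset.mem_symmDiff]
  have hcc : (A.1 \ B.1).card = (B.1 \ A.1).card :=
    Finset.card_sdiff_comm (by rw [A.2, B.2])
  have hsum : (A.1 \ B.1).card + (B.1 \ A.1).card = 2 := by
    rw [← Finset.card_union_of_disjoint hdisj, hun, hcard2]
  obtain ⟨u, hu⟩ := Finset.card_eq_one.mp (show (A.1 \ B.1).card = 1 by omega)
  obtain ⟨v, hv⟩ := Finset.card_eq_one.mp (show (B.1 \ A.1).card = 1 by omega)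
  have huv : ({u, v} : Finset (Fin n)) = {x, y} := by
    rw [← hsd, ← hun, hu, hv]; rfl
  have hu2 : u ∈ ({x, y} : Finset (Fin n)) := by
    rw [← huv]; simp
  have hv2 : v ∈ ({x, y} : Finset (Fin n)) := by
    rw [← huv]; simp
  have hune : u ≠ v := by
    intro he
    have : u ∈ A.1 \ B.1 := by rw [hu]; simp
    have h2 : v ∈ B.1 \ A.1 := by rw [hv]; simp
    rw [← he] at h2
    simp at this h2
    tauto
  have hA : fsum A = (∑ t ∈ A.1 ∩ B.1, t.val) + u.val := by
    rw [show A.1 ∩ B.1 = A.1 ∩ B.1 from rfl]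
    rw [fsum, ← Finset.sum_inter_add_sum_sdiff A.1 B.1 (fun t => t.val), hu,
      Finset.sum_singleton]
  have hB : fsum B = (∑ t ∈ A.1 ∩ B.1, t.val) + v.val := by
    rw [fsum, ← Finset.sum_inter_add_sum_sdiff B.1 A.1 (fun t => t.val), hv,
      Finset.sum_singleton, Finset.inter_comm]
  simp [Finset.mem_insert, Finset.mem_singleton] at hu2 hv2
  have : (u.val = x.val ∨ u.val = y.val) := by
    rcases hu2 with h | h <;> [left; right] <;> rw [h]
  have : (v.val = x.val ∨ v.val = y.val) := by
    rcases hv2 with h | h <;> [left; right] <;> rw [h]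
  have hunev : u.val ≠ v.val := fun he => hune (Fin.ext he)
  omega

lemma walk_fsum {A B : TV n} (p : (TG n).Walk A B) :
    fsum A ≤ fsum B + p.length ∧ fsum B ≤ fsum A + p.length := by
  induction p with
  | nil => simp
  | cons h q ih =>
    have := adj_fsum h
    rw [SimpleGraph.Walk.length_cons]
    omega

end Stmt12Aux

namespace Stmt12Aux
variable {n : ℕ}

def Cv (hn : 4 ≤ n) : TV n := mk 0 1 2 (by omega) (by omega) (by omega)
def Dv (hn : 4 ≤ n) : TV n := mk (n-3) (n-2) (n-1) (by omega) (by omega) (by omega)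

lemma fsum_Cv (hn : 4 ≤ n) : fsum (Cv hn) = 3 := by rw [Cv, fsum_mk]

lemma fsum_Dv (hn : 4 ≤ n) : fsum (Dv hn) = 3 * n - 6 := by rw [Dv, fsum_mk]; omega

lemma eq_Cv {A : TV n} (hn : 4 ≤ n) (h : fsum A = 3) : A = Cv hn := by
  obtain ⟨a, b, c, hab, hbc, hc, rfl⟩ := exists_repr A
  rw [fsum_mk] at h
  exact mk_eq (by omega) (by omega) (by omega)

lemma eq_Dv {A : TV n} (hn : 4 ≤ n) (h : fsum A = 3 * n - 6) : A = Dv hn := by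
  obtain ⟨a, b, c, hab, hbc, hc, rfl⟩ := exists_repr A
  rw [fsum_mk] at h
  exact mk_eq (by omega) (by omega) (by omega)

lemma toC (hn : 4 ≤ n) : ∀ (m : ℕ) (A : TV n), fsum A ≤ m + 3 →
    (TG n).edist A (Cv hn) ≤ (m : ℕ∞) := by
  intro m
  induction m with
  | zero =>
    intro A hA
    have := (fsum_bounds A).1
    rw [eq_Cv hn (show fsum A = 3 by omega), SimpleGraph.edist_self]
    exact le_refl _
  | succ m ih =>
    intro A hA
    by_cases h3 : fsum A = 3
    · rw [eq_Cv hn h3, SimpleGraph.edist_self]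
      exact zero_le
    · obtain ⟨B, hAB, hB⟩ := exists_down A (by have := (fsum_bounds A).1; omega)
      calc (TG n).edist A (Cv hn) ≤ (TG n).edist A B + (TG n).edist B (Cv hn) :=
            SimpleGraph.edist_triangle
        _ ≤ 1 + (m : ℕ∞) :=
            add_le_add (le_of_eq (SimpleGraph.edist_eq_one_iff_adj.mpr hAB)) (ih B (by omega))
        _ = ((m + 1 : ℕ) : ℕ∞) := by push_cast; ring

lemma toD (hn : 4 ≤ n) : ∀ (m : ℕ) (A : TV n), 3 * n - 6 ≤ fsum A + m →
    (TG n).edist A (Dv hn) ≤ (m : ℕ∞) := by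
  intro m
  induction m with
  | zero =>
    intro A hA
    have := (fsum_bounds A).2
    rw [eq_Dv hn (show fsum A = 3 * n - 6 by omega), SimpleGraph.edist_self]
    exact le_refl _
  | succ m ih =>
    intro A hA
    by_cases h3 : fsum A = 3 * n - 6
    · rw [eq_Dv hn h3, SimpleGraph.edist_self]
      exact zero_le
    · obtain ⟨B, hAB, hB⟩ := exists_up A (by have := (fsum_bounds A).2; omega)
      calc (TG n).edist A (Dv hn) ≤ (TG n).edist A B + (TG n).edist B (Dv hn) :=
            SimpleGraph.edist_triangle
        _ ≤ 1 + (m : ℕ∞) :=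
            add_le_add (le_of_eq (SimpleGraph.edist_eq_one_iff_adj.mpr hAB)) (ih B (by omega))
        _ = ((m + 1 : ℕ) : ℕ∞) := by push_cast; ring

lemma keyC (hn : 4 ≤ n) (A : TV n) :
    (TG n).edist A (Cv hn) ≤ ((fsum A - 3 : ℕ) : ℕ∞) :=
  toC hn (fsum A - 3) A (by have := (fsum_bounds A).1; omega)

lemma keyD (hn : 4 ≤ n) (A : TV n) :
    (TG n).edist A (Dv hn) ≤ ((3 * n - 6 - fsum A : ℕ) : ℕ∞) :=
  toD hn (3 * n - 6 - fsum A) A (by have := (fsum_bounds A).2; omega)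

lemma ediam_eq (hn : 4 ≤ n) : (TG n).ediam = ((3 * (n - 3) : ℕ) : ℕ∞) := by
  apply le_antisymm
  · apply SimpleGraph.ediam_le_of_edist_le
    intro A B
    have hA := fsum_bounds A
    have hB := fsum_bounds B
    rcases (show (fsum A - 3) + (fsum B - 3) ≤ 3 * (n - 3) ∨
        (3 * n - 6 - fsum A) + (3 * n - 6 - fsum B) ≤ 3 * (n - 3) by omega) with h | h
    · calc (TG n).edist A B ≤ (TG n).edist A (Cv hn) + (TG n).edist (Cv hn) B :=
            SimpleGraph.edist_triangle
        _ = (TG n).edist A (Cv hn) + (TG n).edist B (Cv hn) := by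
            rw [SimpleGraph.edist_comm (u := Cv hn)]
        _ ≤ ((fsum A - 3 : ℕ) : ℕ∞) + ((fsum B - 3 : ℕ) : ℕ∞) :=
            add_le_add (keyC hn A) (keyC hn B)
        _ ≤ ((3 * (n - 3) : ℕ) : ℕ∞) := by
            rw [← Nat.cast_add]
            exact Nat.cast_le.mpr h
    · calc (TG n).edist A B ≤ (TG n).edist A (Dv hn) + (TG n).edist (Dv hn) B :=
            SimpleGraph.edist_triangle
        _ = (TG n).edist A (Dv hn) + (TG n).edist B (Dv hn) := by
            rw [SimpleGraph.edist_comm (u := Dv hn)]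
        _ ≤ ((3 * n - 6 - fsum A : ℕ) : ℕ∞) + ((3 * n - 6 - fsum B : ℕ) : ℕ∞) :=
            add_le_add (keyD hn A) (keyD hn B)
        _ ≤ ((3 * (n - 3) : ℕ) : ℕ∞) := by
            rw [← Nat.cast_add]
            exact Nat.cast_le.mpr h
  · refine le_trans ?_ (SimpleGraph.edist_le_ediam (u := Cv hn) (v := Dv hn))
    have hne : (TG n).edist (Cv hn) (Dv hn) ≠ ⊤ :=
      ne_top_of_le_ne_top (ENat.coe_ne_top _) (keyD hn (Cv hn))
    obtain ⟨p, hp⟩ := SimpleGraph.exists_walk_of_edist_ne_top hne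
    rw [← hp]
    have hw := walk_fsum p
    rw [fsum_Cv, fsum_Dv] at hw
    exact_mod_cast (show 3 * (n - 3) ≤ p.length by omega)

end Stmt12Aux


theorem stmt12 {n : ℕ} (hn : 4 ≤ n) :
    (tokenGraph (pathGraph n) 3).diam = 3 * (n - 3) := by
  have h := Stmt12Aux.ediam_eq hn
  rw [SimpleGraph.diam, h, ENat.toNat_coe]
end

section
/- For every n ≥ 3, the independence number of the 3-token graph Γ₃(P_n) of the path on n vertices equals (n³ − 3n² + 2n)/12 if n is even and (n³ − 3n² + 5n − 3)/12 if n is odd. -/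
open SimpleGraph Finset

namespace Stmt13Aux

open Finset SimpleGraph

def phi (n a b c : ℕ) : ℕ × ℕ × ℕ :=
  if b % 2 = 0 ∨ (n % 2 = 1 ∧ a + 1 < b) then
    (if a % 2 = 0 then (a+1, b, c) else (a-1, b, c))
  else
    (if (c - b) % 2 = 0 then (a, b, c-1) else if c + 1 < n then (a, b, c+1) else (a, b, c))

variable {n : ℕ}

abbrev V (n : ℕ) := {s : Finset (Fin n) // s.card = 3}

lemma card3 {x y z : Fin n} (h1 : x < y) (h2 : y < z) :
    ({x, y, z} : Finset (Fin n)).card = 3 :=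
  Finset.card_eq_three.mpr ⟨x, y, z, ne_of_lt h1, ne_of_lt (h1.trans h2), ne_of_lt h2, rfl⟩

def mkV (hn : 3 ≤ n) (a b c : ℕ) : V n :=
  if h : a < b ∧ b < c ∧ c < n then
    ⟨{⟨a, by omega⟩, ⟨b, by omega⟩, ⟨c, by omega⟩}, by
      apply card3 <;> exact Fin.mk_lt_mk.mpr (by omega)⟩
  else
    ⟨{⟨0, by omega⟩, ⟨1, by omega⟩, ⟨2, by omega⟩}, by
      apply card3 <;> exact Fin.mk_lt_mk.mpr (by omega)⟩

def sOf (A : V n) : ℕ := ∑ x ∈ A.1, x.val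
def aOf (A : V n) : ℕ := (A.1.min' (Finset.card_pos.mp (by rw [A.2]; omega))).val
def cOf (A : V n) : ℕ := (A.1.max' (Finset.card_pos.mp (by rw [A.2]; omega))).val
def bOf (A : V n) : ℕ := sOf A - aOf A - cOf A

lemma ofs_mk {x y z : Fin n} (h1 : x < y) (h2 : y < z) (A : V n) (hA : A.1 = {x, y, z}) :
    aOf A = x.val ∧ bOf A = y.val ∧ cOf A = z.val ∧ sOf A = x.val + y.val + z.val := by
  have hx : x ∈ A.1 := by rw [hA]; simp
  have hz : z ∈ A.1 := by rw [hA]; simp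
  have ha : aOf A = x.val := by
    show (A.1.min' _).val = x.val
    congr 1
    refine le_antisymm (Finset.min'_le _ _ hx) (Finset.le_min' _ _ _ ?_)
    intro w hw
    rw [hA] at hw
    simp only [Finset.mem_insert, Finset.mem_singleton] at hw
    rcases hw with rfl | rfl | rfl
    exacts [le_refl _, h1.le, (h1.trans h2).le]
  have hc : cOf A = z.val := by
    show (A.1.max' _).val = z.val
    congr 1
    refine le_antisymm (Finset.max'_le _ _ _ ?_) (Finset.le_max' _ _ hz)
    intro w hw
    rw [hA] at hw
    simp only [Finset.mem_insert, Finset.mem_singleton] at hw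
    rcases hw with rfl | rfl | rfl
    exacts [(h1.trans h2).le, h2.le, le_refl _]
  have hs : sOf A = x.val + y.val + z.val := by
    rw [sOf, hA, Finset.sum_insert (by
        simp only [Finset.mem_insert, Finset.mem_singleton]
        push_neg
        exact ⟨ne_of_lt h1, ne_of_lt (h1.trans h2)⟩),
      Finset.sum_insert (by simp only [Finset.mem_singleton]; exact ne_of_lt h2),
      Finset.sum_singleton]
    ring
  have h1' : x.val < y.val := h1
  have h2' : y.val < z.val := h2
  exact ⟨ha, by rw [bOf, hs, ha, hc]; omega, hc, hs⟩

lemma trip_spec (A : V n) : ∃ x y z : Fin n, x < y ∧ y < z ∧ A.1 = {x, y, z} ∧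
    aOf A = x.val ∧ bOf A = y.val ∧ cOf A = z.val ∧ sOf A = x.val + y.val + z.val := by
  obtain ⟨x, y, z, hxy, hxz, hyz, hA⟩ := Finset.card_eq_three.mp A.2
  obtain ⟨x', y', z', h1, h2, hA'⟩ : ∃ x' y' z' : Fin n, x' < y' ∧ y' < z' ∧
      A.1 = {x', y', z'} := by
    rcases lt_or_gt_of_ne hxy with h | h <;> rcases lt_or_gt_of_ne hxz with h' | h' <;>
      rcases lt_or_gt_of_ne hyz with h'' | h''
    · exact ⟨x, y, z, h, h'', hA⟩
    · exact ⟨x, z, y, h', h'', by rw [hA]; ext w; simp; tauto⟩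
    · exact absurd (h.trans h'') (lt_asymm h')
    · exact ⟨z, x, y, h', h, by rw [hA]; ext w; simp; tauto⟩
    · exact ⟨y, x, z, h, h', by rw [hA]; ext w; simp; tauto⟩
    · exact absurd (h.trans h') (lt_asymm h'')
    · exact ⟨y, z, x, h'', h', by rw [hA]; ext w; simp; tauto⟩
    · exact ⟨z, y, x, h'', h, by rw [hA]; ext w; simp; tauto⟩
  obtain ⟨e1, e2, e3, e4⟩ := ofs_mk h1 h2 A hA'
  exact ⟨x', y', z', h1, h2, hA', e1, e2, e3, e4⟩

lemma trip_lt (A : V n) : aOf A < bOf A ∧ bOf A < cOf A ∧ cOf A < n := by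
  obtain ⟨x, y, z, h1, h2, _, e1, e2, e3, _⟩ := trip_spec A
  have h1' : x.val < y.val := h1
  have h2' : y.val < z.val := h2
  have := z.isLt
  omega

lemma mkV_val (hn : 3 ≤ n) {a b c : ℕ} (h : a < b ∧ b < c ∧ c < n) :
    (mkV hn a b c).1 = {⟨a, by omega⟩, ⟨b, by omega⟩, ⟨c, by omega⟩} := by
  rw [mkV, dif_pos h]

lemma ofs_mkV (hn : 3 ≤ n) {a b c : ℕ} (h : a < b ∧ b < c ∧ c < n) :
    aOf (mkV hn a b c) = a ∧ bOf (mkV hn a b c) = b ∧ cOf (mkV hn a b c) = c := by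
  have := ofs_mk (x := ⟨a, by omega⟩) (y := ⟨b, by omega⟩) (z := ⟨c, by omega⟩)
    (Fin.mk_lt_mk.mpr h.1) (Fin.mk_lt_mk.mpr h.2.1) (mkV hn a b c) (mkV_val hn h)
  exact ⟨this.1, this.2.1, this.2.2.1⟩

lemma mkV_eqV (hn : 3 ≤ n) {x y z : Fin n} (h1 : x < y) (h2 : y < z) (A : V n)
    (hA : A.1 = {x, y, z}) : mkV hn x.val y.val z.val = A := by
  have h1' : x.val < y.val := h1
  have h2' : y.val < z.val := h2
  apply Subtype.ext
  rw [mkV_val hn ⟨h1', h2', z.isLt⟩, hA]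

variable (hn : 3 ≤ n)

lemma phi_valid' {a b c : ℕ} (ha : a < b) (hb : b < c) (hc : c < n) :
    (phi n a b c).1 < (phi n a b c).2.1 ∧ (phi n a b c).2.1 < (phi n a b c).2.2 ∧
      (phi n a b c).2.2 < n := by
  unfold phi; split_ifs <;> simp only [Prod.mk.injEq, and_true, true_and, true_or, or_true,
    true_iff, iff_true] <;> omega

def phiV (A : V n) : V n :=
  mkV hn (phi n (aOf A) (bOf A) (cOf A)).1 (phi n (aOf A) (bOf A) (cOf A)).2.1
    (phi n (aOf A) (bOf A) (cOf A)).2.2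

lemma phiV_ofs (A : V n) :
    aOf (phiV hn A) = (phi n (aOf A) (bOf A) (cOf A)).1 ∧
    bOf (phiV hn A) = (phi n (aOf A) (bOf A) (cOf A)).2.1 ∧
    cOf (phiV hn A) = (phi n (aOf A) (bOf A) (cOf A)).2.2 := by
  have hlt := trip_lt A
  exact ofs_mkV hn (phi_valid' hlt.1 hlt.2.1 hlt.2.2)
lemma phi_invol' {a b c : ℕ} (ha : a < b) (hb : b < c) (hc : c < n) :
    phi n (phi n a b c).1 (phi n a b c).2.1 (phi n a b c).2.2 = (a, b, c) := by
  unfold phi; split_ifs <;> (try dsimp only at *) <;>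
    simp only [Prod.mk.injEq, and_true, true_and, true_or, or_true, true_iff, iff_true] <;> omega

lemma phi_cases' {a b c : ℕ} (ha : a < b) (hb : b < c) (hc : c < n) :
    (phi n a b c = (a, b, c)) ∨
    ((phi n a b c).2.1 = b ∧ (phi n a b c).2.2 = c ∧
      ((phi n a b c).1 = a + 1 ∨ (phi n a b c).1 + 1 = a)) ∨
    ((phi n a b c).1 = a ∧ (phi n a b c).2.1 = b ∧
      ((phi n a b c).2.2 = c + 1 ∨ (phi n a b c).2.2 + 1 = c)) := by
  unfold phi; split_ifs <;>
    simp only [Prod.mk.injEq, and_true, true_and, true_or, or_true, true_iff, iff_true] <;> omega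

lemma phi_fix_iff' {a b c : ℕ} (ha : a < b) (hb : b < c) (hc : c < n) :
    phi n a b c = (a, b, c) ↔ (n % 2 = 1 ∧ b % 2 = 1 ∧ a + 1 = b ∧ c + 1 = n) := by
  unfold phi; split_ifs <;>
    simp only [Prod.mk.injEq, and_true, true_and, true_or, or_true, true_iff, iff_true] <;> omega

lemma mkV_trip (A : V n) : mkV hn (aOf A) (bOf A) (cOf A) = A := by
  obtain ⟨x, y, z, h1, h2, hA, e1, e2, e3, _⟩ := trip_spec A
  rw [e1, e2, e3]
  exact mkV_eqV hn h1 h2 A hA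

lemma phiV_invol (A : V n) : phiV hn (phiV hn A) = A := by
  have hlt := trip_lt A
  have ho := phiV_ofs hn A
  have hi := phi_invol' (n := n) hlt.1 hlt.2.1 hlt.2.2
  rw [phiV, ho.1, ho.2.1, ho.2.2, hi]
  exact mkV_trip hn A

lemma phiV_inj : Function.Injective (phiV hn) := by
  intro A B h
  have := phiV_invol hn A
  rw [h, phiV_invol hn B] at this
  exact this.symm

lemma phiV_fix_iff (A : V n) :
    phiV hn A = A ↔ (n % 2 = 1 ∧ bOf A % 2 = 1 ∧ aOf A + 1 = bOf A ∧ cOf A + 1 = n) := by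
  have hlt := trip_lt A
  have ho := phiV_ofs hn A
  rw [← phi_fix_iff' (n := n) hlt.1 hlt.2.1 hlt.2.2]
  constructor
  · intro h
    rw [h] at ho
    exact Prod.ext ho.1.symm (Prod.ext ho.2.1.symm ho.2.2.symm)
  · intro h
    rw [phiV, h]
    exact mkV_trip hn A
lemma symmDiff_3 {α : Type*} [DecidableEq α] {x y z w : α} (hwx : w ≠ x) (hwy : w ≠ y)
    (hwz : w ≠ z) (hxy : x ≠ y) (hxz : x ≠ z) (hyz : y ≠ z) :
    symmDiff ({x, y, z} : Finset α) {w, y, z} = {x, w} := by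
  ext t
  simp only [Finset.mem_symmDiff, Finset.mem_insert, Finset.mem_singleton]
  constructor
  · rintro (⟨h1, h2⟩ | ⟨h1, h2⟩) <;> tauto
  · rintro (rfl | rfl) <;> tauto

lemma perm_3 {α : Type*} [DecidableEq α] (x y z : α) :
    ({x, y, z} : Finset α) = {z, x, y} := by
  ext t; simp only [Finset.mem_insert, Finset.mem_singleton]; tauto

lemma adj_phiV (A : V n) (hne : phiV hn A ≠ A) :
    (tokenGraph (pathGraph n) 3).Adj A (phiV hn A) := by
  obtain ⟨x, y, z, h1, h2, hA, e1, e2, e3, _⟩ := trip_spec A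
  have h1' : x.val < y.val := h1
  have h2' : y.val < z.val := h2
  have hlt := trip_lt A
  have hv := phi_valid' (n := n) hlt.1 hlt.2.1 hlt.2.2
  have hcas := phi_cases' (n := n) hlt.1 hlt.2.1 hlt.2.2
  have hfix : ¬ (phi n (aOf A) (bOf A) (cOf A) = (aOf A, bOf A, cOf A)) := by
    intro hf
    exact hne (by rw [phiV, hf]; exact mkV_trip hn A)
  obtain ⟨a', b', c', hpeq⟩ : ∃ a' b' c', phi n (aOf A) (bOf A) (cOf A) = (a', b', c') :=
    ⟨_, _, _, rfl⟩
  rw [hpeq] at hv hcas hfix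
  dsimp only at hv hcas hfix
  simp only [Prod.mk.injEq] at hcas hfix
  have hval : (phiV hn A).1 = {⟨a', by omega⟩, ⟨b', by omega⟩, ⟨c', by omega⟩} := by
    rw [phiV, hpeq]
    exact mkV_val hn ⟨hv.1, hv.2.1, hv.2.2⟩
  show ∃ u v, (pathGraph n).Adj u v ∧ symmDiff A.1 (phiV hn A).1 = {u, v}
  rcases hcas with h | ⟨hb', hc', hmove⟩ | ⟨ha', hb', hmove⟩
  · exact absurd h hfix
  · -- the minimum moved
    have hy : (⟨b', by omega⟩ : Fin n) = y := Fin.ext (show b' = y.val by omega)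
    have hz : (⟨c', by omega⟩ : Fin n) = z := Fin.ext (show c' = z.val by omega)
    rw [hval, hy, hz, hA]
    refine ⟨x, ⟨a', by omega⟩, ?_, ?_⟩
    · rw [pathGraph_adj]
      show x.val + 1 = a' ∨ a' + 1 = x.val
      omega
    · apply symmDiff_3 <;> simp only [ne_eq, Fin.ext_iff] <;> show ¬ _ = _ <;> omega
  · -- the maximum moved
    have hx : (⟨a', by omega⟩ : Fin n) = x := Fin.ext (show a' = x.val by omega)
    have hy : (⟨b', by omega⟩ : Fin n) = y := Fin.ext (show b' = y.val by omega)
    rw [hval, hx, hy, hA, perm_3 x y z, perm_3 x y (⟨c', by omega⟩ : Fin n)]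
    refine ⟨z, ⟨c', by omega⟩, ?_, ?_⟩
    · rw [pathGraph_adj]
      show z.val + 1 = c' ∨ c' + 1 = z.val
      omega
    · apply symmDiff_3 <;> simp only [ne_eq, Fin.ext_iff] <;> show ¬ _ = _ <;> omega
def par (A : V n) : ZMod 2 := (sOf A : ZMod 2)

lemma adj_par {A B : V n} (h : (tokenGraph (pathGraph n) 3).Adj A B) : par A ≠ par B := by
  obtain ⟨x, y, hxy, hsd⟩ := h
  have hxyne : x ≠ y := hxy.ne
  have key : par A + par B = 1 := by
    have e1 : (∑ v ∈ A.1 ∪ B.1, (v.val : ZMod 2)) + ∑ v ∈ A.1 ∩ B.1, (v.val : ZMod 2) =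
        (∑ v ∈ A.1, (v.val : ZMod 2)) + ∑ v ∈ B.1, (v.val : ZMod 2) :=
      Finset.sum_union_inter
    have e2 : symmDiff A.1 B.1 = (A.1 ∪ B.1) \ (A.1 ∩ B.1) := by
      rw [symmDiff_eq_sup_sdiff_inf, Finset.sup_eq_union, Finset.inf_eq_inter]
    have e3 : (∑ v ∈ (A.1 ∪ B.1) \ (A.1 ∩ B.1), (v.val : ZMod 2)) +
        ∑ v ∈ A.1 ∩ B.1, (v.val : ZMod 2) = ∑ v ∈ A.1 ∪ B.1, (v.val : ZMod 2) :=
      Finset.sum_sdiff Finset.inter_subset_union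
    have e4 : ∑ v ∈ symmDiff A.1 B.1, (v.val : ZMod 2) = (x.val : ZMod 2) + y.val := by
      rw [hsd, Finset.sum_pair hxyne]
    have e5 : ∀ v : ZMod 2, v + v = 0 := by decide
    have e6 : (x.val : ZMod 2) + y.val = 1 := by
      have : x.val + 1 = y.val ∨ y.val + 1 = x.val := pathGraph_adj.mp hxy
      have hm : (x.val + y.val) % 2 = 1 := by omega
      calc (x.val : ZMod 2) + y.val = ((x.val + y.val : ℕ) : ZMod 2) := by push_cast; ring
        _ = (((x.val + y.val) % 2 : ℕ) : ZMod 2) := (ZMod.natCast_mod _ 2).symm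
        _ = 1 := by rw [hm]; norm_num
    have hpa : par A = ∑ v ∈ A.1, (v.val : ZMod 2) := by rw [par, sOf]; push_cast; rfl
    have hpb : par B = ∑ v ∈ B.1, (v.val : ZMod 2) := by rw [par, sOf]; push_cast; rfl
    rw [hpa, hpb, ← e1, ← e3, ← e2, e4]
    rw [add_assoc, e5, add_zero]
    exact e6
  intro heq
  rw [heq, ← two_mul] at key
  have : (2 : ZMod 2) = 0 := by decide
  rw [this, zero_mul] at key
  exact absurd key (by decide)

lemma par_abc (A : V n) : par A = ((aOf A + bOf A + cOf A : ℕ) : ZMod 2) := by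
  obtain ⟨x, y, z, h1, h2, hA, e1, e2, e3, e4⟩ := trip_spec A
  rw [par, e4, e1, e2, e3]
def Fx (hn : 3 ≤ n) : Finset (V n) := Finset.univ.filter (fun A => phiV hn A = A)

lemma mem_Fx {A : V n} : A ∈ Fx hn ↔ phiV hn A = A := by
  simp [Fx]

lemma Fx_par {A : V n} (hA : A ∈ Fx hn) : par A = 1 := by
  rw [mem_Fx hn] at hA
  obtain ⟨hn1, hb, hab, hcn⟩ := (phiV_fix_iff hn A).mp hA
  have hlt := trip_lt A
  rw [par_abc]
  have hm : (aOf A + bOf A + cOf A) % 2 = 1 := by omega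
  rw [← ZMod.natCast_mod, hm]
  norm_num

lemma card_Fx_even (hpar : n % 2 = 0) : (Fx hn).card = 0 := by
  rw [Finset.card_eq_zero, Finset.eq_empty_iff_forall_notMem]
  intro A hA
  rw [mem_Fx hn] at hA
  have := ((phiV_fix_iff hn A).mp hA).1
  omega

lemma card_Fx_odd (hpar : n % 2 = 1) : (Fx hn).card = (n - 1) / 2 := by
  have hvalid : ∀ i : ℕ, i < (n-1)/2 → 2*i < 2*i+1 ∧ 2*i+1 < n-1 ∧ n-1 < n := by
    intro i hi; omega
  have himg : Fx hn = (Finset.range ((n-1)/2)).image (fun i => mkV hn (2*i) (2*i+1) (n-1)) := by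
    ext A
    simp only [mem_Fx hn, Finset.mem_image, Finset.mem_range]
    constructor
    · intro hA
      obtain ⟨hn1, hb, hab, hcn⟩ := (phiV_fix_iff hn A).mp hA
      have hlt := trip_lt A
      refine ⟨aOf A / 2, by omega, ?_⟩
      have h2i : 2 * (aOf A / 2) = aOf A := by omega
      have h2i' : 2 * (aOf A / 2) + 1 = bOf A := by omega
      have h2i'' : n - 1 = cOf A := by omega
      rw [h2i', h2i'', h2i]
      exact mkV_trip hn A
    · rintro ⟨i, hi, rfl⟩
      have ho := ofs_mkV hn (hvalid i hi)
      rw [phiV_fix_iff hn, ho.1, ho.2.1, ho.2.2]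
      exact ⟨hpar, by omega, by omega, by omega⟩
  rw [himg, Finset.card_image_of_injOn, Finset.card_range]
  intro i hi j hj hij
  simp only [Finset.coe_range, Set.mem_Iio] at hi hj
  dsimp only at hij
  have h1 := (ofs_mkV hn (hvalid i hi)).1
  have h2 := (ofs_mkV hn (hvalid j hj)).1
  rw [hij] at h1
  omega

def OddS (n : ℕ) : Finset (V n) := Finset.univ.filter (fun A => par A = 1)
def EvenS (n : ℕ) : Finset (V n) := Finset.univ.filter (fun A => par A = 0)

lemma EO_card : (EvenS n).card + (OddS n).card = Fintype.card (V n) := by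
  rw [EvenS, OddS]
  have h := Finset.card_filter_add_card_filter_not
    (s := (Finset.univ : Finset (V n))) (p := fun A => par A = 0)
  rw [Finset.card_univ] at h
  rw [← h]
  have he : (Finset.univ.filter (fun a : V n => ¬ par a = 0)) =
      Finset.univ.filter (fun A => par A = 1) := by
    apply Finset.filter_congr
    intro A _
    exact (by decide : ∀ v : ZMod 2, (¬ v = 0) ↔ v = 1) (par A)
  rw [he]

lemma zmod01 : ∀ u v : ZMod 2, u ≠ v → u = 0 → v = 1 := by decide
lemma zmod10 : ∀ u v : ZMod 2, u ≠ v → u = 1 → v = 0 := by decide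

lemma phiV_notmem_Fx {A : V n} (hnf : phiV hn A ≠ A) : phiV hn A ∉ Fx hn := by
  intro hf
  rw [mem_Fx hn, phiV_invol hn A] at hf
  exact hnf hf.symm

lemma two_O : 2 * (OddS n).card = Fintype.card (V n) + (Fx hn).card := by
  have hF : Fx hn ⊆ OddS n := by
    intro A hA
    simp only [OddS, Finset.mem_filter]
    exact ⟨Finset.mem_univ _, Fx_par hn hA⟩
  have h1 : (EvenS n).card ≤ ((OddS n) \ (Fx hn)).card := by
    apply Finset.card_le_card_of_injOn (phiV hn) ?_ (fun a _ b _ h => phiV_inj hn h)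
    intro A hA
    simp only [EvenS, Finset.mem_coe, Finset.mem_filter] at hA
    have hnf : phiV hn A ≠ A := by
      intro hf
      have := Fx_par hn ((mem_Fx hn).mpr hf)
      rw [hA.2] at this
      exact absurd this (by decide)
    have hpar := adj_par (adj_phiV hn A hnf)
    rw [Finset.mem_coe, Finset.mem_sdiff]
    refine ⟨?_, phiV_notmem_Fx hn hnf⟩
    simp only [OddS, Finset.mem_filter]
    exact ⟨Finset.mem_univ _, zmod01 _ _ hpar hA.2⟩
  have h2 : ((OddS n) \ (Fx hn)).card ≤ (EvenS n).card := by
    apply Finset.card_le_card_of_injOn (phiV hn) ?_ (fun a _ b _ h => phiV_inj hn h)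
    intro A hA
    rw [Finset.mem_coe, Finset.mem_sdiff, mem_Fx hn] at hA
    obtain ⟨hAo, hnf⟩ := hA
    simp only [OddS, Finset.mem_filter] at hAo
    have hpar := adj_par (adj_phiV hn A hnf)
    simp only [EvenS, Finset.mem_coe, Finset.mem_filter]
    exact ⟨Finset.mem_univ _, zmod10 _ _ hpar hAo.2⟩
  have h3 : ((OddS n) \ (Fx hn)).card = (OddS n).card - (Fx hn).card :=
    Finset.card_sdiff_of_subset hF
  have h4 : (Fx hn).card ≤ (OddS n).card := Finset.card_le_card hF
  have h5 := EO_card (n := n)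
  omega

lemma indep_bound (s : Finset (V n))
    (hind : ∀ a ∈ s, ∀ b ∈ s, ¬(tokenGraph (pathGraph n) 3).Adj a b) :
    2 * s.card ≤ Fintype.card (V n) + (Fx hn).card := by
  have key : (s \ Fx hn).card ≤ ((Finset.univ \ Fx hn) \ s).card := by
    apply Finset.card_le_card_of_injOn (phiV hn) ?_ (fun a _ b _ h => phiV_inj hn h)
    intro A hA
    rw [Finset.mem_coe, Finset.mem_sdiff] at hA
    obtain ⟨hAs, hAf⟩ := hA
    have hnf : phiV hn A ≠ A := fun hf => hAf ((mem_Fx hn).mpr hf)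
    have hadj := adj_phiV hn A hnf
    rw [Finset.mem_coe, Finset.mem_sdiff, Finset.mem_sdiff]
    exact ⟨⟨Finset.mem_univ _, phiV_notmem_Fx hn hnf⟩, fun hs => hind A hAs _ hs hadj⟩
  have hdisj : Disjoint (s \ Fx hn) ((Finset.univ \ Fx hn) \ s) := by
    rw [Finset.disjoint_left]
    intro A hA1 hA2
    rw [Finset.mem_sdiff] at hA1 hA2
    exact hA2.2 hA1.1
  have h3 : (s \ Fx hn).card + ((Finset.univ \ Fx hn) \ s).card ≤
      (Finset.univ \ Fx hn).card := by
    rw [← Finset.card_union_of_disjoint hdisj]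
    apply Finset.card_le_card
    apply Finset.union_subset
    · intro A hA
      rw [Finset.mem_sdiff] at hA ⊢
      exact ⟨Finset.mem_univ _, hA.2⟩
    · exact Finset.sdiff_subset
  have h4 : (Finset.univ \ Fx hn).card = Fintype.card (V n) - (Fx hn).card := by
    rw [Finset.card_sdiff_of_subset (Finset.subset_univ _), Finset.card_univ]
  have h5 : (s ∩ Fx hn).card + (s \ Fx hn).card = s.card :=
    Finset.card_inter_add_card_sdiff s (Fx hn)
  have h6 : (s ∩ Fx hn).card ≤ (Fx hn).card :=
    Finset.card_le_card Finset.inter_subset_right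
  have h7 : (Fx hn).card ≤ Fintype.card (V n) := by
    rw [← Finset.card_univ]
    exact Finset.card_le_card (Finset.subset_univ _)
  omega
lemma card_V : Fintype.card (V n) = n.choose 3 := by
  simpa using Fintype.card_finset_len (α := Fin n) 3

lemma value_eq' (hn3 : 3 ≤ n) :
    (if Even n then (n ^ 3 - 3 * n ^ 2 + 2 * n) / 12
     else (n ^ 3 - 3 * n ^ 2 + 5 * n - 3) / 12) = (OddS n).card := by
  obtain ⟨k, rfl⟩ : ∃ k, n = k + 3 := ⟨n - 3, by omega⟩
  clear hn3
  obtain ⟨K2, hK2⟩ : ∃ m, m = k * k := ⟨_, rfl⟩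
  obtain ⟨K3, hK3⟩ : ∃ m, m = k * k * k := ⟨_, rfl⟩
  have hch : 6 * (k+3).choose 3 = K3 + 6*K2 + 11*k + 6 := by
    have h := Nat.descFactorial_eq_factorial_mul_choose (k+3) 3
    have h2 : (k+3).descFactorial 3 = (k+1) * ((k+2) * ((k+3) * 1)) := rfl
    have h3 : Nat.factorial 3 = 6 := rfl
    rw [h3] at h
    rw [← h, h2, hK2, hK3]
    ring
  have e1 : (k+3)^3 = K3 + 9*K2 + 27*k + 27 := by rw [hK2, hK3]; ring
  have e2 : (k+3)^2 = K2 + 6*k + 9 := by rw [hK2]; ring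
  have htwo := two_O (n := k+3) (by omega)
  have hcard := card_V (n := k+3)
  rw [hcard] at htwo
  clear hK2 hK3
  by_cases hp : (k+3) % 2 = 0
  · rw [if_pos (Nat.even_iff.mpr hp)]
    have hfx := card_Fx_even (by omega) hp
    rw [hfx] at htwo
    rw [e1, e2]
    omega
  · have hp1 : (k+3) % 2 = 1 := by omega
    rw [if_neg (by rw [Nat.even_iff]; omega)]
    have hfx := card_Fx_odd (by omega) hp1
    rw [hfx] at htwo
    rw [e1, e2]
    omega

end Stmt13Aux

theorem stmt13' {n : ℕ} (hn : 3 ≤ n) :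
    IsGreatest {k : ℕ | ∃ s : Finset {s : Finset (Fin n) // s.card = 3}, s.card = k ∧
        ∀ a ∈ s, ∀ b ∈ s, ¬(tokenGraph (pathGraph n) 3).Adj a b}
      (if Even n then (n ^ 3 - 3 * n ^ 2 + 2 * n) / 12
       else (n ^ 3 - 3 * n ^ 2 + 5 * n - 3) / 12) := by
  constructor
  · refine ⟨Stmt13Aux.OddS n, (Stmt13Aux.value_eq' hn).symm, ?_⟩
    intro a ha b hb hadj
    simp only [Stmt13Aux.OddS, Finset.mem_filter] at ha hb
    exact (Stmt13Aux.adj_par hadj) (ha.2.trans hb.2.symm)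
  · rintro m ⟨s, rfl, hind⟩
    have h1 := Stmt13Aux.indep_bound hn s hind
    have h2 := Stmt13Aux.two_O (n := n) hn
    rw [Stmt13Aux.value_eq' hn]
    omega


theorem stmt13 {n : ℕ} (hn : 3 ≤ n) :
    IsGreatest {k : ℕ | ∃ s : Finset {s : Finset (Fin n) // s.card = 3}, s.card = k ∧
        ∀ a ∈ s, ∀ b ∈ s, ¬(tokenGraph (pathGraph n) 3).Adj a b}
      (if Even n then (n ^ 3 - 3 * n ^ 2 + 2 * n) / 12
       else (n ^ 3 - 3 * n ^ 2 + 5 * n - 3) / 12) := stmt13' hn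
end

section
/- For every n ≥ 4, the map sending a 3-subset {x_i, x_j, x_k} with i < j < k of the vertices of the path P_n to the triple (j−1, i, n+1−k) is a well-defined bijection from the vertex set of Γ₃(P_n) onto the vertex set of the cubical staircase graph CS_n. -/
open SimpleGraph Finset

lemma aux_sorted {n : ℕ} (s : Finset (Fin n)) (h : s.card = 3) :
    ∃ t : Fin n × Fin n × Fin n, t.1 < t.2.1 ∧ t.2.1 < t.2.2 ∧ s = {t.1, t.2.1, t.2.2} := by
  obtain ⟨a, b, c, hab, hac, hbc, rfl⟩ := Finset.card_eq_three.mp h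
  rcases hab.lt_or_gt with h1 | h1 <;> rcases hac.lt_or_gt with h2 | h2 <;>
    rcases hbc.lt_or_gt with h3 | h3
  · exact ⟨(a, b, c), h1, h3, rfl⟩
  · exact ⟨(a, c, b), h2, h3, by ext v; simp; tauto⟩
  · exact absurd (h3.trans (h2.trans h1)) (lt_irrefl b)
  · exact ⟨(c, a, b), h2, h1, by ext v; simp; tauto⟩
  · exact ⟨(b, a, c), h1, h2, by ext v; simp; tauto⟩
  · exact absurd (h3.trans (h1.trans h2)) (lt_irrefl c)
  · exact ⟨(b, c, a), h3, h2, by ext v; simp; tauto⟩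
  · exact ⟨(c, b, a), h3, h1, by ext v; simp; tauto⟩

lemma aux_unique {n : ℕ} {i j k i' j' k' : Fin n} (hij : i < j) (hjk : j < k)
    (hij' : i' < j') (hjk' : j' < k')
    (hs : ({i, j, k} : Finset (Fin n)) = {i', j', k'}) : i = i' ∧ j = j' ∧ k = k' := by
  have d : ∀ x : Fin n, x ∈ ({i', j', k'} : Finset (Fin n)) →
      x.val = i.val ∨ x.val = j.val ∨ x.val = k.val := by
    intro x hx
    rw [← hs] at hx
    simp only [Finset.mem_insert, Finset.mem_singleton] at hx
    rcases hx with rfl | rfl | rfl <;> tauto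
  have d1 := d i' (by simp)
  have d2 := d j' (by simp)
  have d3 := d k' (by simp)
  rw [Fin.lt_def] at hij hjk hij' hjk'
  have : i.val = i'.val ∧ j.val = j'.val ∧ k.val = k'.val := by
    rcases d1 with h | h | h <;> rcases d2 with h' | h' | h' <;>
      rcases d3 with h'' | h'' | h'' <;> omega
  exact ⟨Fin.ext this.1, Fin.ext this.2.1, Fin.ext this.2.2⟩


theorem stmt17 {n : ℕ} (hn : 4 ≤ n) :
    ∃ ψ : {s : Finset (Fin n) // s.card = 3} → CSVert n,
      Function.Bijective ψ ∧
      ∀ (s : {s : Finset (Fin n) // s.card = 3}) (i j k : Fin n),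
        i < j → j < k → s.1 = {i, j, k} →
        (ψ s).1 = ((j : ℕ), (i : ℕ) + 1, n - (k : ℕ)) := by
  have hex : ∀ s : {s : Finset (Fin n) // s.card = 3},
      ∃ t : Fin n × Fin n × Fin n, t.1 < t.2.1 ∧ t.2.1 < t.2.2 ∧ s.1 = {t.1, t.2.1, t.2.2} :=
    fun s => aux_sorted s.1 s.2
  choose f h1 h2 h3 using hex
  have hb : ∀ s : {s : Finset (Fin n) // s.card = 3},
      1 ≤ ((f s).2.1 : ℕ) ∧ ((f s).2.1 : ℕ) ≤ n - 2 ∧ 1 ≤ ((f s).1 : ℕ) + 1 ∧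
      ((f s).1 : ℕ) + 1 ≤ ((f s).2.1 : ℕ) ∧ 1 ≤ n - ((f s).2.2 : ℕ) ∧
      n - ((f s).2.2 : ℕ) ≤ n - 1 - ((f s).2.1 : ℕ) := by
    intro s
    have a1 := h1 s; have a2 := h2 s; have a3 := (f s).2.2.isLt
    rw [Fin.lt_def] at a1 a2
    omega
  set ψ : {s : Finset (Fin n) // s.card = 3} → CSVert n :=
    fun s => ⟨(((f s).2.1 : ℕ), ((f s).1 : ℕ) + 1, n - ((f s).2.2 : ℕ)), hb s⟩ with hψ
  have key : ∀ (s : {s : Finset (Fin n) // s.card = 3}) (i j k : Fin n),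
      i < j → j < k → s.1 = {i, j, k} → f s = (i, j, k) := by
    intro s i j k hij hjk hset
    obtain ⟨e1, e2, e3⟩ := aux_unique (h1 s) (h2 s) hij hjk ((h3 s).symm.trans hset)
    exact Prod.ext e1 (Prod.ext e2 e3)
  refine ⟨ψ, ⟨?_, ?_⟩, ?_⟩
  · -- injective
    intro s s' h
    have hv : (ψ s).1 = (ψ s').1 := congrArg Subtype.val h
    simp only [hψ, Prod.mk.injEq] at hv
    have a3 := (f s).2.2.isLt
    have a3' := (f s').2.2.isLt
    have e1 : (f s).1 = (f s').1 := Fin.ext (by omega)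
    have e2 : (f s).2.1 = (f s').2.1 := Fin.ext (by omega)
    have e3 : (f s).2.2 = (f s').2.2 := Fin.ext (by omega)
    apply Subtype.ext
    rw [h3 s, h3 s', e1, e2, e3]
  · -- surjective
    rintro ⟨⟨a, b, c⟩, hc⟩
    dsimp only at hc
    obtain ⟨c1, c2, c3, c4, c5, c6⟩ := hc
    have hi : b - 1 < n := by omega
    have hj : a < n := by omega
    have hk : n - c < n := by omega
    set i : Fin n := ⟨b - 1, hi⟩
    set j : Fin n := ⟨a, hj⟩
    set k : Fin n := ⟨n - c, hk⟩
    have hij : i < j := by rw [Fin.lt_def]; show b - 1 < a; omega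
    have hjk : j < k := by rw [Fin.lt_def]; show a < n - c; omega
    have hcard : ({i, j, k} : Finset (Fin n)).card = 3 :=
      Finset.card_eq_three.mpr ⟨i, j, k, hij.ne, (hij.trans hjk).ne, hjk.ne, rfl⟩
    refine ⟨⟨{i, j, k}, hcard⟩, ?_⟩
    apply Subtype.ext
    have hk' := key ⟨{i, j, k}, hcard⟩ i j k hij hjk rfl
    simp only [hψ, hk']
    have t1 : n - (n - c) = c := by omega
    have t2 : b - 1 + 1 = b := by omega
    show ((a : ℕ), (b - 1 : ℕ) + 1, n - (n - c)) = (a, b, c)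
    rw [t1, t2]
  · -- spec
    intro s i j k hij hjk hset
    simp only [hψ, key s i j k hij hjk hset]
end
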